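/- Let G be a simple graph on n vertices with edge features y_{ij} ∈ ℝ^{c_Y}, and let (m_l, φ_l, u_l)_{l ≥ 0} define an arbitrary message-passing neural network (MPNN) computing node features by x_i^{(l+1)} = u_l(x_i^{(l)}, φ_l({m_l(x_i^{(l)}, x_j^{(l)}, y_{ij}) : v_j ∈ N_i})), where φ_l is a function of finite multisets, starting from initial features x_i^{(0)} ∈ ℝ^{c_0}. Define local context matrices U_i^{(l)} ∈ ℝ^{n×c_l} by U_i^{(0)}[k,:] = x_i^{(0)} if k = i and 0 otherwise, and U_i^{(l+1)}[k,:] = δ_{k,i} · u_l( (𝟙𝟙ᵀU_i^{(l)})[k,:], φ_l({ m_l((𝟙𝟙ᵀU_i^{(l)})[k,:], (𝟙𝟙ᵀU_j^{(l)})[k,:], y_{ij}) : v_j ∈ N_i }) ), where 𝟙 ∈ ℝ^n is the all-ones vector and δ_{k,i} = 1 if k = i and 0 otherwise. Then for every layer l ≥ 0 and every vertex v_i: U_i^{(l)}[i,:] = x_i^{(l)} and U_i^{(l)}[k,:] = 0 for every k ≠ i. -/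

import Mathlib

open scoped Classical

/-- simulation lemma behind Proposition 1. The SMP recursion which
replicates the row sum `(𝟙𝟙ᵀU)[k,:] = Σ_p U[p,:]` and zeroes out all rows except the
diagonal one reproduces, on the diagonal entries `U_i^{(l)}[i,:]`, the node features
computed by an arbitrary MPNN, while all the other rows stay zero. -/
theorem smp_simulates_mpnn (n cY : ℕ) (G : SimpleGraph (Fin n))
    (y : Fin n → Fin n → (Fin cY → ℝ))
    (c b : ℕ → ℕ)
    (m : (l : ℕ) → (Fin (c l) → ℝ) → (Fin (c l) → ℝ) → (Fin cY → ℝ) → (Fin (b l) → ℝ))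
    (φ : (l : ℕ) → Multiset (Fin (b l) → ℝ) → (Fin (b l) → ℝ))
    (u : (l : ℕ) → (Fin (c l) → ℝ) → (Fin (b l) → ℝ) → (Fin (c (l+1)) → ℝ))
    (x : (l : ℕ) → Fin n → (Fin (c l) → ℝ))
    (hx : ∀ l i, x (l+1) i = u l (x l i)
      (φ l ((G.neighborFinset i).val.map (fun j => m l (x l i) (x l j) (y i j)))))
    (U : (l : ℕ) → Fin n → Matrix (Fin n) (Fin (c l)) ℝ)
    (hU0 : ∀ i, U 0 i = Matrix.of fun k => if k = i then x 0 i else 0)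
    (hU : ∀ l i, U (l+1) i = Matrix.of fun k =>
      if k = i then
        u l (∑ p, U l i p)
          (φ l ((G.neighborFinset i).val.map
            (fun j => m l (∑ p, U l i p) (∑ p, U l j p) (y i j))))
      else 0) :
    ∀ (l : ℕ) (i : Fin n), U l i i = x l i ∧ ∀ k, k ≠ i → U l i k = 0 := by
  intro l
  induction l with
  | zero =>
    intro i
    constructor
    · rw [hU0]; funext q; simp
    · intro k hk; rw [hU0]; funext q; simp [hk]
  | succ l ih =>
    have hsum : ∀ j : Fin n, (∑ p, U l j p) = x l j := by
      intro j
      have h := ih j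
      refine (Finset.sum_eq_single j ?_ ?_).trans ?_; rotate_right
      · exact h.1
      · intro p _ hp; exact h.2 p hp
      · intro h'; exact absurd (Finset.mem_univ j) h'
    intro i
    constructor
    · rw [hU l i, hx l i]
      funext q
      simp [hsum]
    · intro k hk
      rw [hU l i]
      funext q
      simp [hk]
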